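/- Let ψ₁, ψ₂, ψ₃, … be a sequence of real polynomials in one variable x with ψ₁(x) = x and ψ_{i+1}'' = ψᵢ for all i ≥ 1 (each ψ_{i+1} is any second antiderivative of ψᵢ, so two integration constants are chosen at each step, one of which is the nontrivial parameter). Define p₀ = 1 and, for n ≥ 1, pₙ = W[ψ₁, …, ψₙ], the Wronskian determinant det( ψⱼ^{(i−1)} )_{1 ≤ i,j ≤ n}. Then for every n ≥ 0 the Burchnall–Chaundy bilinear recurrence holds identically: pₙ(x)·p_{n+1}''(x) − 2·pₙ'(x)·p_{n+1}'(x) + p_{n+1}(x)·pₙ''(x) = 0. -/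

import Mathlib

open Polynomial


noncomputable section

abbrev KK : Type := FractionRing (Polynomial ℝ)

namespace BC

def fd (z : KK) : KK :=
  Localization.liftOn z
    (fun a b => Localization.mk (derivative a * (b : Polynomial ℝ) - a * derivative (b : Polynomial ℝ)) (b * b))
    (by
      intro a c b d h
      rw [Localization.r_iff_exists] at h
      obtain ⟨u, hu⟩ := h
      have hu0 : (u : Polynomial ℝ) ≠ 0 := nonZeroDivisors.coe_ne_zero u
      have h1 : (d : Polynomial ℝ) * a = (b : Polynomial ℝ) * c := by
        have := mul_left_cancel₀ hu0 hu
        simpa using this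
      have h2 : derivative ((d : Polynomial ℝ) * a) = derivative ((b : Polynomial ℝ) * c) := by rw [h1]
      rw [derivative_mul, derivative_mul] at h2
      rw [Localization.mk_eq_mk_iff, Localization.r_iff_exists]
      refine ⟨1, ?_⟩
      push_cast
      linear_combination ((d : Polynomial ℝ) * (b : Polynomial ℝ)) * h2
        - (derivative (d : Polynomial ℝ) * (b : Polynomial ℝ)
           + derivative (b : Polynomial ℝ) * (d : Polynomial ℝ)) * h1 )

end BC

namespace BC

theorem fd_mk (a : Polynomial ℝ) (b : nonZeroDivisors (Polynomial ℝ)) :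
    fd (Localization.mk a b)
      = Localization.mk (derivative a * (b : Polynomial ℝ) - a * derivative (b : Polynomial ℝ)) (b * b) :=
  Localization.liftOn_mk _ _ _ _

theorem fd_add (x y : KK) : fd (x + y) = fd x + fd y := by
  refine Localization.induction_on₂ x y ?_
  rintro ⟨a, b⟩ ⟨c, d⟩
  rw [Localization.add_mk, fd_mk, fd_mk, fd_mk, Localization.add_mk,
    Localization.mk_eq_mk_iff, Localization.r_iff_exists]
  refine ⟨1, ?_⟩
  push_cast
  simp only [derivative_mul, derivative_add]
  ring

theorem fd_mul (x y : KK) : fd (x * y) = fd x * y + x * fd y := by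
  refine Localization.induction_on₂ x y ?_
  rintro ⟨a, b⟩ ⟨c, d⟩
  rw [Localization.mk_mul, fd_mk, fd_mk, fd_mk, Localization.mk_mul, Localization.mk_mul,
    Localization.add_mk, Localization.mk_eq_mk_iff, Localization.r_iff_exists]
  refine ⟨1, ?_⟩
  push_cast
  simp only [derivative_mul, derivative_add]
  ring

theorem fd_algebraMap (q : Polynomial ℝ) :
    fd (algebraMap (Polynomial ℝ) KK q) = algebraMap (Polynomial ℝ) KK (derivative q) := by
  rw [← Localization.mk_one_eq_algebraMap, ← Localization.mk_one_eq_algebraMap, fd_mk]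
  rw [Localization.mk_eq_mk_iff, Localization.r_iff_exists]
  refine ⟨1, ?_⟩
  push_cast
  simp [derivative_one]

theorem fd_zero : fd 0 = 0 := by
  have h0 : (0 : KK) = algebraMap (Polynomial ℝ) KK 0 := by simp
  rw [h0, fd_algebraMap]; simp

theorem fd_one : fd 1 = 0 := by
  have h0 : (1 : KK) = algebraMap (Polynomial ℝ) KK 1 := by simp
  rw [h0, fd_algebraMap]; simp

def fdA : KK →+ KK := AddMonoidHom.mk' fd fd_add

theorem fd_sum {ι : Type*} (s : Finset ι) (f : ι → KK) :
    fd (∑ i ∈ s, f i) = ∑ i ∈ s, fd (f i) :=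
  map_sum fdA f s

theorem fd_neg (x : KK) : fd (-x) = - fd x := map_neg fdA x

theorem fd_sub (x y : KK) : fd (x - y) = fd x - fd y := map_sub fdA x y

theorem fd_iter_algebraMap (i : ℕ) (q : Polynomial ℝ) :
    fd^[i] (algebraMap (Polynomial ℝ) KK q) = algebraMap (Polynomial ℝ) KK (derivative^[i] q) := by
  induction i generalizing q with
  | zero => simp
  | succ n ih =>
      rw [Function.iterate_succ_apply, Function.iterate_succ_apply, fd_algebraMap, ih]

theorem fd_div (x y : KK) (hy : y ≠ 0) :
    fd (x / y) = (fd x * y - x * fd y) / (y * y) := by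
  have h1 : x / y * y = x := div_mul_cancel₀ x hy
  have h2 := fd_mul (x / y) y
  rw [h1] at h2
  rw [eq_div_iff (mul_ne_zero hy hy)]
  generalize x / y = z at h1 h2 ⊢
  linear_combination - y * h2 - fd y * h1

end BC

namespace BC

variable (ψ : ℕ → Polynomial ℝ)

theorem psi_facts (hψ1 : ψ 1 = X)
    (hψ : ∀ i ≥ 1, derivative (derivative (ψ (i + 1))) = ψ i) (j : ℕ) :
    (ψ (j+1)).natDegree = 2*j+1 ∧ (ψ (j+1)).coeff (2*j+1) = (((2*j+1).factorial : ℝ))⁻¹ := by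
  induction j with
  | zero => simp [hψ1]
  | succ j ih =>
      obtain ⟨hdeg, hcoe⟩ := ih
      have hD : derivative (derivative (ψ (j+2))) = ψ (j+1) := hψ (j+1) (by omega)
      have hcoeff : ∀ k : ℕ, (ψ (j+1)).coeff k
          = (ψ (j+2)).coeff (k+2) * ((k+2 : ℕ) : ℝ) * ((k+1 : ℕ) : ℝ) := by
        intro k
        rw [← hD, coeff_derivative, coeff_derivative]
        push_cast
        ring
      have htop : (ψ (j+2)).coeff (2*j+3) = (((2*j+3).factorial : ℝ))⁻¹ := by
        have h := hcoeff (2*j+1)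
        rw [hcoe] at h
        have h1 : ((2*j+1)+2 : ℕ) = 2*j+3 := by omega
        rw [h1] at h
        have hfac : ((2*j+3).factorial : ℝ)
            = ((2*j+1).factorial : ℝ) * ((2*j+2 : ℕ) : ℝ) * ((2*j+3 : ℕ) : ℝ) := by
          have : (2*j+3).factorial = (2*j+1).factorial * (2*j+2) * (2*j+3) := by
            have e1 : 2*j+3 = (2*j+2) + 1 := by omega
            have e2 : 2*j+2 = (2*j+1) + 1 := by omega
            rw [e1, Nat.factorial_succ, e2, Nat.factorial_succ]
            ring
          rw [this]
          push_cast
          ring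
        have hne2 : ((2*j+2 : ℕ) : ℝ) ≠ 0 := by positivity
        have hne3 : ((2*j+3 : ℕ) : ℝ) ≠ 0 := by positivity
        have hfe : ((2*j+1).factorial : ℝ) ≠ 0 :=
          Nat.cast_ne_zero.mpr (Nat.factorial_ne_zero _)
        rw [hfac]
        rw [mul_inv, mul_inv]
        field_simp at h ⊢
        linear_combination -h
      have hup : (ψ (j+2)).natDegree ≤ 2*j+3 := by
        rw [natDegree_le_iff_coeff_eq_zero]
        intro m hm
        have h2 : m - 2 > 2*j+1 := by omega
        have hz : (ψ (j+1)).coeff (m-2) = 0 :=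
          coeff_eq_zero_of_natDegree_lt (by omega)
        have h := hcoeff (m-2)
        rw [hz] at h
        have hmm : m - 2 + 2 = m := by omega
        rw [hmm] at h
        have hne : ((m-2+2 : ℕ) : ℝ) * ((m-2+1 : ℕ) : ℝ) ≠ 0 := by positivity
        rw [hmm] at hne
        have := h.symm
        rw [mul_assoc] at this
        rcases mul_eq_zero.mp this with h' | h'
        · exact h'
        · exact absurd h' hne
      have hlow : 2*j+3 ≤ (ψ (j+2)).natDegree := by
        apply le_natDegree_of_ne_zero
        rw [htop]
        exact inv_ne_zero (by exact_mod_cast Nat.factorial_ne_zero _)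
      have e3 : 2*(j+1)+1 = 2*j+3 := by omega
      rw [e3]
      exact ⟨le_antisymm hup hlow, htop⟩

end BC

namespace BC

variable (ψ : ℕ → Polynomial ℝ)

theorem coeff_prod_of_le {ι : Type*} (s : Finset ι) (f : ι → Polynomial ℝ) (d : ι → ℕ)
    (h : ∀ i ∈ s, (f i).natDegree ≤ d i) :
    (∏ i ∈ s, f i).coeff (∑ i ∈ s, d i) = ∏ i ∈ s, (f i).coeff (d i) := by
  classical
  induction s using Finset.induction_on with
  | empty => simp
  | @insert a s ha ih =>
      rw [Finset.prod_insert ha, Finset.sum_insert ha, Finset.prod_insert ha]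
      rw [coeff_mul_add_eq_of_natDegree_le (h a (Finset.mem_insert_self a s))
        (le_trans (natDegree_prod_le _ _) (Finset.sum_le_sum
          (fun i hi => h i (Finset.mem_insert_of_mem hi))))]
      rw [ih (fun i hi => h i (Finset.mem_insert_of_mem hi))]

theorem det_psi_ne_zero (hψ1 : ψ 1 = X)
    (hψ : ∀ i ≥ 1, derivative (derivative (ψ (i + 1))) = ψ i) (m : ℕ) :
    (Matrix.of fun i j : Fin m => derivative^[(i:ℕ)] (ψ ((j:ℕ)+1))).det ≠ 0 := by
  classical
  set W : Matrix (Fin m) (Fin m) (Polynomial ℝ) :=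
    Matrix.of fun i j : Fin m => derivative^[(i:ℕ)] (ψ ((j:ℕ)+1)) with hW
  set F : Fin m → ℝ := fun j => (((2*(j:ℕ)+1).factorial : ℝ))⁻¹ with hF
  set A : Matrix (Fin m) (Fin m) ℝ :=
    Matrix.of fun i j : Fin m => (((2*(j:ℕ)+1).descFactorial (i:ℕ) : ℕ) : ℝ) with hA
  set C : Matrix (Fin m) (Fin m) ℝ :=
    Matrix.of fun i j : Fin m => F j * A i j with hC
  set N : ℕ := (∑ i : Fin m, (2*(i:ℕ)+1)) - (∑ i : Fin m, (i:ℕ)) with hNdef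
  have key : W.det.coeff N = C.det := by
    rw [Matrix.det_apply, Matrix.det_apply, finset_sum_coeff]
    apply Finset.sum_congr rfl
    intro σ _
    rw [coeff_smul]
    congr 1
    by_cases hσ : ∀ i : Fin m, ((σ i : ℕ)) ≤ 2*(i:ℕ)+1
    · have hdeg : ∀ i : Fin m, (W (σ i) i).natDegree ≤ 2*(i:ℕ)+1 - (σ i : ℕ) := by
        intro i
        refine le_trans (natDegree_iterate_derivative _ _) ?_
        rw [(psi_facts ψ hψ1 hψ (i:ℕ)).1]
      have hN : (∑ i : Fin m, (2*(i:ℕ)+1 - (σ i : ℕ))) = N := by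
        have h2 : ∑ i : Fin m, ((2*(i:ℕ)+1 - (σ i:ℕ)) + (σ i:ℕ))
            = ∑ i : Fin m, (2*(i:ℕ)+1) :=
          Finset.sum_congr rfl (fun i _ => by rw [Nat.sub_add_cancel (hσ i)])
        rw [Finset.sum_add_distrib] at h2
        have h3 : ∑ i : Fin m, ((σ i : ℕ)) = ∑ i : Fin m, (i:ℕ) :=
          Equiv.sum_comp σ (fun i => (i:ℕ))
        omega
      rw [← hN, coeff_prod_of_le _ _ _ (fun i _ => hdeg i)]
      apply Finset.prod_congr rfl
      intro i _
      have : W (σ i) i = derivative^[((σ i):ℕ)] (ψ ((i:ℕ)+1)) := rfl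
      rw [this, coeff_iterate_derivative, Nat.sub_add_cancel (hσ i),
        (psi_facts ψ hψ1 hψ (i:ℕ)).2]
      simp only [hC, hA, hF, Matrix.of_apply, nsmul_eq_mul]
      ring
    · push_neg at hσ
      obtain ⟨i, hi⟩ := hσ
      have hzero : W (σ i) i = 0 := by
        apply iterate_derivative_eq_zero
        rw [(psi_facts ψ hψ1 hψ (i:ℕ)).1]
        omega
      rw [show (∏ i : Fin m, W (σ i) i) = 0 from Finset.prod_eq_zero (Finset.mem_univ i) hzero,
        show (∏ i : Fin m, C (σ i) i) = 0 from Finset.prod_eq_zero (Finset.mem_univ i)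
        (show C (σ i) i = 0 by
          simp only [hC, hA, Matrix.of_apply]
          rw [Nat.descFactorial_eq_zero_iff_lt.mpr hi]
          simp)]
      simp
  have hCdet : C.det ≠ 0 := by
    have h1 : C.det = (∏ j : Fin m, F j) * A.det := Matrix.det_mul_row F A
    have h2 : A.det ≠ 0 := by
      have hT : A.det = (Matrix.of fun i j : Fin m =>
          ((descPochhammer ℝ (j:ℕ)).eval (((2*(i:ℕ)+1 : ℕ)) : ℝ))).det := by
        rw [← Matrix.det_transpose]
        congr 1
        ext i j
        simp only [Matrix.transpose_apply, hA, Matrix.of_apply]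
        rw [descPochhammer_eval_eq_descFactorial]
      rw [hT, ← Matrix.det_eval_matrixOfPolynomials_eq_det_vandermonde
        (fun i : Fin m => (((2*(i:ℕ)+1 : ℕ)) : ℝ)) (fun j : Fin m => descPochhammer ℝ (j:ℕ))
        (fun j => descPochhammer_natDegree ℝ (j:ℕ)) (fun j => monic_descPochhammer ℝ (j:ℕ))]
      apply Matrix.det_vandermonde_ne_zero_iff.mpr
      intro a b hab
      have hval : 2*(a:ℕ)+1 = 2*(b:ℕ)+1 := Nat.cast_injective hab
      exact Fin.ext (by omega)
    have h3 : (∏ j : Fin m, F j) ≠ 0 :=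
      Finset.prod_ne_zero_iff.mpr (fun j _ =>
        inv_ne_zero (Nat.cast_ne_zero.mpr (Nat.factorial_ne_zero _)))
    rw [h1]
    exact mul_ne_zero h3 h2
  intro hdet
  rw [hdet] at key
  simp at key
  exact hCdet key.symm

end BC

namespace BC

variable (ψ : ℕ → Polynomial ℝ)

def Psi (j : ℕ) : KK := algebraMap (Polynomial ℝ) KK (ψ j)

def wcol (n : ℕ) (f : KK) : Fin (n+1) → KK :=
  Fin.snoc (fun j : Fin n => Psi ψ ((j:ℕ)+1)) f

def Theta (n : ℕ) (f : KK) : KK :=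
  (Matrix.of fun i j : Fin (n+1) => fd^[(i:ℕ)] (wcol ψ n f j)).det

def Mi (n : ℕ) (i : Fin (n+1)) : KK :=
  (Matrix.of fun r c : Fin n => fd^[((i.succAbove r : Fin (n+1)) : ℕ)] (Psi ψ ((c:ℕ)+1))).det

def act {m : ℕ} (c : Fin m → KK) (f : KK) : KK := ∑ i : Fin m, c i * fd^[(i:ℕ)] f

theorem theta_eq_act (n : ℕ) (f : KK) :
    Theta ψ n f = act (fun i : Fin (n+1) => (-1:KK)^((i:ℕ)+n) * Mi ψ n i) f := by
  rw [Theta, Matrix.det_succ_column _ (Fin.last n), act]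
  apply Finset.sum_congr rfl
  intro i _
  have h1 : (Matrix.of fun i j : Fin (n+1) => fd^[(i:ℕ)] (wcol ψ n f j)) i (Fin.last n)
      = fd^[(i:ℕ)] f := by
    simp [wcol, Fin.snoc_last]
  have h2 : ((Matrix.of fun i j : Fin (n+1) => fd^[(i:ℕ)] (wcol ψ n f j)).submatrix
      i.succAbove (Fin.last n).succAbove) = Matrix.of fun r c : Fin n =>
        fd^[((i.succAbove r : Fin (n+1)) : ℕ)] (Psi ψ ((c:ℕ)+1)) := by
    rw [Fin.succAbove_last]
    ext r c
    simp [wcol, Fin.snoc_castSucc]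
  rw [h1, h2, ← Mi]
  simp only [Fin.val_last]
  ring

theorem theta_dup (n : ℕ) (j : Fin n) : Theta ψ n (Psi ψ ((j:ℕ)+1)) = 0 := by
  apply Matrix.det_zero_of_column_eq (i := Fin.castSucc j) (j := Fin.last n)
  · exact Fin.ne_of_lt (Fin.castSucc_lt_last j)
  · intro k
    simp [wcol, Fin.snoc_castSucc, Fin.snoc_last]

theorem wcol_top (n : ℕ) (j : Fin (n+1)) : wcol ψ n (Psi ψ (n+1)) j = Psi ψ ((j:ℕ)+1) := by
  refine Fin.lastCases ?_ ?_ j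
  · simp [wcol, Fin.snoc_last]
  · intro c
    simp [wcol, Fin.snoc_castSucc]

theorem theta_top (n : ℕ) : Theta ψ n (Psi ψ (n+1))
    = algebraMap (Polynomial ℝ) KK
      (Matrix.of fun i j : Fin (n+1) => derivative^[(i:ℕ)] (ψ ((j:ℕ)+1))).det := by
  rw [Theta, RingHom.map_det]
  congr 1
  ext i j
  have hw : ∀ j : Fin (n+1), wcol ψ n ((algebraMap (Polynomial ℝ) KK) (ψ (n+1))) j
      = algebraMap (Polynomial ℝ) KK (ψ ((j:ℕ)+1)) := by
    intro j
    have := wcol_top ψ n j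
    simpa [Psi] using this
  simp only [Matrix.of_apply, RingHom.mapMatrix_apply, Matrix.map_apply, Psi, hw,
    fd_iter_algebraMap]

theorem mi_top (n : ℕ) : Mi ψ n (Fin.last n)
    = algebraMap (Polynomial ℝ) KK
      (Matrix.of fun i j : Fin n => derivative^[(i:ℕ)] (ψ ((j:ℕ)+1))).det := by
  rw [Mi, RingHom.map_det]
  congr 1
  ext r c
  simp only [Matrix.of_apply, RingHom.mapMatrix_apply, Matrix.map_apply, Fin.succAbove_last,
    Fin.coe_castSucc, Psi, fd_iter_algebraMap]

theorem op_unique (hψ1 : ψ 1 = X)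
    (hψ : ∀ i ≥ 1, derivative (derivative (ψ (i + 1))) = ψ i)
    (m : ℕ) (c : Fin (m+1) → KK)
    (h : ∀ j : Fin (m+1), ∑ i : Fin (m+1), c i * fd^[(i:ℕ)] (Psi ψ ((j:ℕ)+1)) = 0) :
    c = 0 := by
  have hdet : (Matrix.of fun i j : Fin (m+1) => fd^[(i:ℕ)] (Psi ψ ((j:ℕ)+1))).det ≠ 0 := by
    have : (Matrix.of fun i j : Fin (m+1) => fd^[(i:ℕ)] (Psi ψ ((j:ℕ)+1))).det
        = algebraMap (Polynomial ℝ) KK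
          (Matrix.of fun i j : Fin (m+1) => derivative^[(i:ℕ)] (ψ ((j:ℕ)+1))).det := by
      rw [RingHom.map_det]
      congr 1
      ext i j
      simp only [Matrix.of_apply, RingHom.mapMatrix_apply, Matrix.map_apply, Psi,
        fd_iter_algebraMap]
    rw [this]
    exact (map_ne_zero_iff _ (IsFractionRing.injective (Polynomial ℝ) KK)).mpr
      (det_psi_ne_zero ψ hψ1 hψ (m+1))
  apply Matrix.eq_zero_of_vecMul_eq_zero hdet
  funext j
  simpa [Matrix.vecMul, dotProduct] using h j

end BC

namespace BC

variable (ψ : ℕ → Polynomial ℝ)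

def P (m : ℕ) : KK :=
  algebraMap (Polynomial ℝ) KK
    (Matrix.of fun i j : Fin m => derivative^[(i:ℕ)] (ψ ((j:ℕ)+1))).det

theorem P_ne_zero (hψ1 : ψ 1 = X)
    (hψ : ∀ i ≥ 1, derivative (derivative (ψ (i + 1))) = ψ i) (m : ℕ) : P ψ m ≠ 0 :=
  (map_ne_zero_iff _ (IsFractionRing.injective (Polynomial ℝ) KK)).mpr
    (det_psi_ne_zero ψ hψ1 hψ m)

theorem P_zero : P ψ 0 = 1 := by
  rw [P, Matrix.det_fin_zero, map_one]

theorem theta_top' (n : ℕ) : Theta ψ n (Psi ψ (n+1)) = P ψ (n+1) := theta_top ψ n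

theorem mi_top' (n : ℕ) : Mi ψ n (Fin.last n) = P ψ n := mi_top ψ n

theorem theta_zero (f : KK) : Theta ψ 0 f = f := by
  rw [Theta, Matrix.det_fin_one]
  have : wcol ψ 0 f 0 = f := by
    have h0 : (0 : Fin 1) = Fin.last 0 := rfl
    rw [h0, wcol, Fin.snoc_last]
  simp [this]

theorem theta_dd_top (hψ1 : ψ 1 = X)
    (hψ : ∀ i ≥ 1, derivative (derivative (ψ (i + 1))) = ψ i) (n : ℕ) :
    Theta ψ n (fd (fd (Psi ψ (n+1)))) = 0 := by
  cases n with
  | zero =>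
      rw [theta_zero]
      rw [Psi, fd_algebraMap, fd_algebraMap, hψ1]
      simp
  | succ n =>
      have h : fd (fd (Psi ψ (n+2))) = Psi ψ (n+1) := by
        rw [Psi, fd_algebraMap, fd_algebraMap, hψ (n+1) (by omega), Psi]
      rw [h]
      have := theta_dup ψ (n+1) ⟨n, by omega⟩
      simpa using this

theorem divided_form (Q X : KK) (hQ : Q ≠ 0) :
    fd (fd (X/Q)) + (2*(fd (fd Q)*Q - (fd Q)^2)/Q^2) * (X/Q)
      = (Q * fd (fd X) - 2*fd Q * fd X + fd (fd Q) * X)/(Q*Q) := by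
  have h1 : fd (X/Q) = (fd X * Q - X * fd Q)/(Q*Q) := fd_div _ _ hQ
  have h2 : fd (fd (X/Q)) = (fd (fd X * Q - X * fd Q) * (Q*Q)
      - (fd X * Q - X * fd Q) * fd (Q*Q))/((Q*Q)*(Q*Q)) := by
    rw [h1]; exact fd_div _ _ (mul_ne_zero hQ hQ)
  have h3 : fd (fd X * Q - X * fd Q) = fd (fd X) * Q - X * fd (fd Q) := by
    rw [fd_sub, fd_mul, fd_mul]; ring
  have h4 : fd (Q*Q) = fd Q * Q + Q * fd Q := fd_mul _ _
  rw [h2, h3, h4]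
  field_simp
  ring

theorem log_deriv_mul (Pq φ : KK) (hP : Pq ≠ 0) (hφ : φ ≠ 0) :
    2*(fd (fd (φ*Pq)) * (φ*Pq) - (fd (φ*Pq))^2)/(φ*Pq)^2
      = 2*(fd (fd Pq) * Pq - (fd Pq)^2)/Pq^2 + 2*((fd (fd φ) * φ - (fd φ)^2)/φ^2) := by
  have h1 : fd (φ*Pq) = fd φ * Pq + φ * fd Pq := fd_mul _ _
  have h2 : fd (fd (φ*Pq)) = fd (fd φ) * Pq + 2*(fd φ * fd Pq) + φ * fd (fd Pq) := by
    rw [h1, fd_add, fd_mul, fd_mul]; ring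
  rw [h2, h1]
  field_simp
  ring

theorem step_core (a0 a1 a2 a3 f0 f1 f2 f3 u u1 : KK) (h0 : f0 ≠ 0)
    (hT : f2 = -(u*f0)) (hT' : f3 = -(u1*f0) - u*f1) :
    (a3 + u1*a0 + u*a1) - (f1/f0) * (a2 + u*a0)
      = (a3 - (((f3*f0 - f1*f2)*f0 - 2*f1*(f2*f0 - f1^2))/(f0^3))*a0
          - 2*((f2*f0 - f1^2)/(f0^2))*a1 - (f1/f0)*a2)
        + (u + 2*((f2*f0 - f1^2)/(f0^2))) * (a1 - (f1/f0)*a0) := by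
  rw [hT', hT]
  simp only [div_eq_mul_inv, ← inv_pow]
  linear_combination (-(u1*a0)*(f0^2*(f0⁻¹)^2 + f0*f0⁻¹ + 1)) * (mul_inv_cancel₀ h0)

end BC

namespace BC

variable (ψ : ℕ → Polynomial ℝ)

theorem main_S (hψ1 : ψ 1 = X)
    (hψ : ∀ i ≥ 1, derivative (derivative (ψ (i + 1))) = ψ i) (n : ℕ) :
    ∀ f : KK,
      P ψ n * fd (fd (Theta ψ n f)) - 2 * fd (P ψ n) * fd (Theta ψ n f)
        + fd (fd (P ψ n)) * Theta ψ n f = P ψ n * Theta ψ n (fd (fd f)) := by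
  induction n with
  | zero =>
      intro f
      rw [P_zero, theta_zero, theta_zero, fd_one, fd_zero]
      ring
  | succ n IH =>
      -- notation
      have hPn : P ψ n ≠ 0 := P_ne_zero ψ hψ1 hψ n
      have hPn1 : P ψ (n+1) ≠ 0 := P_ne_zero ψ hψ1 hψ (n+1)
      set Q : KK := P ψ (n+1) with hQdef
      set Pn : KK := P ψ n with hPdef
      set Un : KK := 2*(fd (fd Pn) * Pn - (fd Pn)^2)/Pn^2 with hUndef
      set U1 : KK := 2*(fd (fd Q) * Q - (fd Q)^2)/Q^2 with hU1def
      -- divided form of the inductive hypothesis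
      have hSdiv : ∀ f : KK, fd (fd (Theta ψ n f / Pn)) + Un * (Theta ψ n f / Pn)
          = Theta ψ n (fd (fd f)) / Pn := by
        intro f
        have hdf := divided_form Pn (Theta ψ n f) hPn
        rw [IH f] at hdf
        rw [hdf, mul_div_mul_left _ _ hPn]
      -- phi and its derivatives
      set φ : KK := Q / Pn with hφdef
      have hφP : φ * Pn = Q := div_mul_cancel₀ _ hPn
      have hφne : φ ≠ 0 := div_ne_zero hPn1 hPn
      set φ1 : KK := fd φ with hφ1def
      set φ2 : KK := fd φ1 with hφ2def
      set φ3 : KK := fd φ2 with hφ3def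
      set s : KK := φ1 / φ with hsdef
      -- A operators as acts
      set aC : Fin (n+1) → KK := fun i => ((-1:KK)^((i:ℕ)+n) * Mi ψ n i)/Pn with haCdef
      have hAform : ∀ h : KK, Theta ψ n h / Pn = act aC h := by
        intro h
        rw [theta_eq_act, act, act, Finset.sum_div]
        apply Finset.sum_congr rfl
        intro i _
        rw [haCdef]
        ring
      have hAtop : Theta ψ n (Psi ψ (n+1)) / Pn = φ := by
        rw [theta_top' ψ n, hφdef]
      -- T(n) : phi'' = -(Un phi)
      have hT : φ2 = -(Un * φ) := by
        have h1 := hSdiv (Psi ψ (n+1))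
        rw [theta_dd_top ψ hψ1 hψ n, zero_div, hAtop] at h1
        rw [hφ2def, hφ1def]
        linear_combination h1
      have hT' : φ3 = -((fd Un)*φ) - Un*φ1 := by
        have h2 : fd φ2 = fd (-(Un * φ)) := by rw [hT]
        rw [fd_neg, fd_mul, ← hφ1def] at h2
        rw [hφ3def, h2]
        ring
      set u1 : KK := fd Un with hu1def
      -- level n+1 coefficients
      set cA : Fin (n+2) → KK := fun i => ((-1:KK)^((i:ℕ)+(n+1)) * Mi ψ (n+1) i)/Q with hcAdef
      have hA1form : ∀ h : KK, Theta ψ (n+1) h / Q = act cA h := by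
        intro h
        rw [theta_eq_act, act, act, Finset.sum_div]
        apply Finset.sum_congr rfl
        intro i _
        rw [hcAdef]
        ring
      have haCtop : aC (Fin.last n) = 1 := by
        rw [haCdef]
        simp only [Fin.val_last, mi_top' ψ n, ← hPdef]
        rw [show ((-1:KK))^(n+n) = 1 from Even.neg_one_pow ⟨n, rfl⟩]
        rw [one_mul, div_self hPn]
      have hcAtop : cA (Fin.last (n+1)) = 1 := by
        rw [hcAdef]
        simp only [Fin.val_last, mi_top' ψ (n+1), ← hQdef]
        rw [show ((-1:KK))^((n+1)+(n+1)) = 1 from Even.neg_one_pow ⟨n+1, rfl⟩]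
        rw [one_mul, div_self hPn1]
      -- step operator coefficients
      set aS : Fin (n+2) → KK := Fin.snoc aC 0 with haSdef
      set aP : Fin (n+2) → KK := Fin.cons 0 aC with haPdef
      set cB : Fin (n+2) → KK := fun i => (fd (aS i) - s * aS i) + aP i with hcBdef
      have act_step : ∀ h : KK, act cB h = fd (act aC h) - s * act aC h := by
        intro h
        rw [act, act]
        simp only [hcBdef, add_mul, sub_mul]
        rw [Finset.sum_add_distrib, Finset.sum_sub_distrib]
        rw [fd_sum]
        have h1 : ∑ i : Fin (n+2), fd (aS i) * fd^[(i:ℕ)] h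
            = ∑ i : Fin (n+1), fd (aC i) * fd^[(i:ℕ)] h := by
          rw [Fin.sum_univ_castSucc]
          simp only [haSdef, Fin.snoc_castSucc, Fin.snoc_last, fd_zero, zero_mul, add_zero,
            Fin.coe_castSucc]
        have h2 : ∑ i : Fin (n+2), s * aS i * fd^[(i:ℕ)] h
            = s * ∑ i : Fin (n+1), aC i * fd^[(i:ℕ)] h := by
          rw [Fin.sum_univ_castSucc, Finset.mul_sum]
          simp only [haSdef, Fin.snoc_castSucc, Fin.snoc_last, mul_zero, zero_mul, add_zero,
            Fin.coe_castSucc]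
          apply Finset.sum_congr rfl
          intro i _
          ring
        have h3 : ∑ i : Fin (n+2), aP i * fd^[(i:ℕ)] h
            = ∑ i : Fin (n+1), aC i * fd (fd^[(i:ℕ)] h) := by
          rw [Fin.sum_univ_succ]
          simp only [haPdef, Fin.cons_zero, Fin.cons_succ, zero_mul, zero_add, Fin.val_succ]
          apply Finset.sum_congr rfl
          intro i _
          rw [Function.iterate_succ_apply' fd]
        rw [h1, h2, h3]
        have h4 : ∑ i : Fin (n+1), fd (aC i * fd^[(i:ℕ)] h)
            = ∑ i : Fin (n+1), (fd (aC i) * fd^[(i:ℕ)] h + aC i * fd (fd^[(i:ℕ)] h)) := by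
          apply Finset.sum_congr rfl
          intro i _
          rw [fd_mul]
        rw [h4, Finset.sum_add_distrib]
        ring
      -- both kill psi_1 .. psi_{n+1}
      have hkB : ∀ j : Fin (n+1), act cB (Psi ψ ((j:ℕ)+1)) = 0 := by
        intro j
        rw [act_step, ← hAform]
        rcases lt_or_eq_of_le (Nat.lt_succ_iff.mp j.isLt) with hj | hj
        · have hz : Theta ψ n (Psi ψ ((j:ℕ)+1)) = 0 := by
            have := theta_dup ψ n ⟨(j:ℕ), hj⟩
            simpa using this
          rw [hz, zero_div, fd_zero, mul_zero, sub_zero]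
        · rw [hj, hAtop, hsdef, hφ1def, div_mul_cancel₀ _ hφne, sub_self]
      have hkA : ∀ j : Fin (n+1), act cA (Psi ψ ((j:ℕ)+1)) = 0 := by
        intro j
        rw [← hA1form]
        have hz : Theta ψ (n+1) (Psi ψ ((j:ℕ)+1)) = 0 := by
          have := theta_dup ψ (n+1) ⟨(j:ℕ), j.isLt⟩
          simpa using this
        rw [hz, zero_div]
      -- uniqueness: cB = cA
      have hceq : cB = cA := by
        have hred : (fun i : Fin (n+1) => cB i.castSucc - cA i.castSucc) = 0 := by
          apply op_unique ψ hψ1 hψ n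
          intro j
          have hfull : ∑ i : Fin (n+2), (cB i - cA i) * fd^[(i:ℕ)] (Psi ψ ((j:ℕ)+1)) = 0 := by
            have := hkB j
            have h2 := hkA j
            rw [act] at this h2
            calc ∑ i : Fin (n+2), (cB i - cA i) * fd^[(i:ℕ)] (Psi ψ ((j:ℕ)+1))
                = (∑ i : Fin (n+2), cB i * fd^[(i:ℕ)] (Psi ψ ((j:ℕ)+1)))
                  - ∑ i : Fin (n+2), cA i * fd^[(i:ℕ)] (Psi ψ ((j:ℕ)+1)) := by
                  rw [← Finset.sum_sub_distrib]
                  apply Finset.sum_congr rfl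
                  intro i _
                  ring
              _ = 0 := by rw [this, h2, sub_zero]
          have hlast : cB (Fin.last (n+1)) - cA (Fin.last (n+1)) = 0 := by
            have hBlast : cB (Fin.last (n+1)) = 1 := by
              rw [hcBdef]
              simp only [haSdef, haPdef, Fin.snoc_last, fd_zero, mul_zero, sub_zero]
              have : Fin.last (n+1) = (Fin.last n).succ := rfl
              rw [this, Fin.cons_succ, haCtop]
              simp
            rw [hBlast, hcAtop, sub_self]
          rw [Fin.sum_univ_castSucc, hlast, zero_mul, add_zero] at hfull
          simpa using hfull
        funext i
        refine Fin.lastCases ?_ ?_ i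
        · rw [hcAtop]
          have hBlast : cB (Fin.last (n+1)) = 1 := by
            rw [hcBdef]
            simp only [haSdef, haPdef, Fin.snoc_last, fd_zero, mul_zero, sub_zero]
            have : Fin.last (n+1) = (Fin.last n).succ := rfl
            rw [this, Fin.cons_succ, haCtop]
            simp
          rw [hBlast]
        · intro k
          have := congrFun hred k
          simpa [sub_eq_zero] using this
      -- key rational facts
      have hfds : fd s = (φ2*φ - φ1^2)/φ^2 := by
        rw [hsdef, fd_div _ _ hφne, ← hφ2def]
        ring
      have hfdds : fd ((φ2*φ - φ1^2)/φ^2) = ((φ3*φ - φ1*φ2)*φ - 2*φ1*(φ2*φ - φ1^2))/φ^3 := by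
        have hnum : fd (φ2*φ - φ1^2) = φ3*φ + φ2*φ1 - 2*(φ1*φ2) := by
          rw [fd_sub, fd_mul, show (φ1:KK)^2 = φ1*φ1 from sq φ1, fd_mul, ← hφ2def, ← hφ3def,
            ← hφ1def]
          ring
        have hden : fd (φ^2) = 2*(φ*φ1) := by
          rw [show (φ:KK)^2 = φ*φ from sq φ, fd_mul, ← hφ1def]
          ring
        rw [fd_div _ _ (pow_ne_zero 2 hφne), hnum, hden]
        field_simp
        ring
      have hU1 : U1 = Un + 2*((φ2*φ - φ1^2)/φ^2) := by
        have := log_deriv_mul Pn φ hPn hφne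
        rw [hφP] at this
        rw [hU1def, hUndef, this, ← hφ1def, ← hφ2def]
      -- the divided identity at level n+1
      intro f
      set a0 : KK := Theta ψ n f / Pn with ha0def
      set a1 : KK := fd a0 with ha1def
      set a2 : KK := fd a1 with ha2def
      set a3 : KK := fd a2 with ha3def
      have hA1f : Theta ψ (n+1) f / Q = a1 - s*a0 := by
        rw [hA1form, ← hceq, act_step, ← hAform, ← ha0def, ← ha1def]
      have hA1dd : Theta ψ (n+1) (fd (fd f)) / Q
          = (a3 + u1*a0 + Un*a1) - (φ1/φ) * (a2 + Un*a0) := by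
        rw [hA1form, ← hceq, act_step, ← hAform, ← hSdiv f, ← ha0def, ← ha1def, ← ha2def]
        rw [fd_add, fd_mul, ← ha3def, ← hu1def, ← hsdef]
        ring
      have hfdA1 : fd (Theta ψ (n+1) f / Q) = a2 - ((φ2*φ - φ1^2)/φ^2)*a0 - s*a1 := by
        rw [hA1f, fd_sub, fd_mul, hfds, ← ha1def, ← ha2def]
        ring
      have hfdfdA1 : fd (fd (Theta ψ (n+1) f / Q))
          = a3 - (((φ3*φ - φ1*φ2)*φ - 2*φ1*(φ2*φ - φ1^2))/φ^3)*a0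
            - 2*((φ2*φ - φ1^2)/φ^2)*a1 - (φ1/φ)*a2 := by
        rw [hfdA1, fd_sub, fd_sub, fd_mul, fd_mul, hfdds, hfds, ← ha1def, ← ha2def, ← ha3def,
          hsdef]
        ring
      have hdivided : Theta ψ (n+1) (fd (fd f)) / Q
          = fd (fd (Theta ψ (n+1) f / Q)) + U1 * (Theta ψ (n+1) f / Q) := by
        rw [hA1dd, hfdfdA1, hA1f, hU1]
        have hTneg : φ2 = -(Un*φ) := hT
        have hTneg' : φ3 = -(u1*φ) - Un*φ1 := by rw [hT', hu1def]
        have := step_core a0 a1 a2 a3 φ φ1 φ2 φ3 Un u1 hφne hTneg hTneg'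
        rw [this, hsdef]
      -- back to cleared form
      have hdf1 := divided_form Q (Theta ψ (n+1) f) hPn1
      rw [← hU1def] at hdf1
      rw [hdf1] at hdivided
      have hfinal := (div_eq_div_iff hPn1 (mul_ne_zero hPn1 hPn1)).mp hdivided
      apply mul_left_cancel₀ hPn1
      linear_combination -hfinal
end BC

namespace BC

variable (ψ : ℕ → Polynomial ℝ)

theorem EK (hψ1 : ψ 1 = X)
    (hψ : ∀ i ≥ 1, derivative (derivative (ψ (i + 1))) = ψ i) (n : ℕ) :
    P ψ n * fd (fd (P ψ (n+1))) - 2 * fd (P ψ n) * fd (P ψ (n+1))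
      + fd (fd (P ψ n)) * P ψ (n+1) = 0 := by
  have h := main_S ψ hψ1 hψ n (Psi ψ (n+1))
  rw [theta_top', theta_dd_top ψ hψ1 hψ n, mul_zero] at h
  exact h

end BC

theorem burchnall_chaundy' (ψ : ℕ → Polynomial ℝ)
    (hψ1 : ψ 1 = X)
    (hψ : ∀ i ≥ 1, derivative (derivative (ψ (i + 1))) = ψ i)
    (p : ℕ → Polynomial ℝ)
    (hp0 : p 0 = 1)
    (hp : ∀ n ≥ 1, p n = Matrix.det (Matrix.of fun i j : Fin n =>
      (fun q => derivative q)^[(i : ℕ)] (ψ ((j : ℕ) + 1))))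
    (n : ℕ) :
    p n * derivative (derivative (p (n + 1)))
      - 2 * derivative (p n) * derivative (p (n + 1))
      + p (n + 1) * derivative (derivative (p n)) = 0 := by
  have hPmap : ∀ m : ℕ, algebraMap (Polynomial ℝ) KK (p m) = BC.P ψ m := by
    intro m
    cases m with
    | zero => rw [hp0, map_one, BC.P_zero]
    | succ m =>
        rw [hp (m+1) (by omega)]
        rfl
  have e1 : ∀ q : Polynomial ℝ,
      algebraMap (Polynomial ℝ) KK (derivative q) = BC.fd (algebraMap (Polynomial ℝ) KK q) :=
    fun q => (BC.fd_algebraMap q).symm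
  apply IsFractionRing.injective (Polynomial ℝ) KK
  rw [map_zero, map_add, map_sub, map_mul, map_mul, map_mul, map_mul]
  simp only [e1, hPmap, map_ofNat]
  have h := BC.EK ψ hψ1 hψ n
  linear_combination h


/-- Burchnall–Chaundy recurrence for the Adler–Moser polynomials: if
`ψ₁ = x`, `ψ_{i+1}'' = ψᵢ` (any second antiderivatives, with arbitrary
integration constants), and `p₀ = 1`, `pₙ = W[ψ₁, …, ψₙ]` is the Wronskian
`det(ψⱼ^{(i−1)})_{1 ≤ i,j ≤ n}`, then
`pₙ p_{n+1}'' − 2 pₙ' p_{n+1}' + p_{n+1} pₙ'' = 0` for every `n ≥ 0`. -/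
theorem burchnall_chaundy (ψ : ℕ → Polynomial ℝ)
    (hψ1 : ψ 1 = X)
    (hψ : ∀ i ≥ 1, derivative (derivative (ψ (i + 1))) = ψ i)
    (p : ℕ → Polynomial ℝ)
    (hp0 : p 0 = 1)
    (hp : ∀ n ≥ 1, p n = Matrix.det (Matrix.of fun i j : Fin n =>
      (fun q => derivative q)^[(i : ℕ)] (ψ ((j : ℕ) + 1))))
    (n : ℕ) :
    p n * derivative (derivative (p (n + 1)))
      - 2 * derivative (p n) * derivative (p (n + 1))
      + p (n + 1) * derivative (derivative (p n)) = 0 :=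
  burchnall_chaundy' ψ hψ1 hψ p hp0 hp n
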